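/- Let b = (b_1,…,b_r) and b′ = (b′_1,…,b′_{r′}) be T-chains with discrepancy vectors δ and δ′ respectively, and assume δ_r + δ′_1 ≤ −1. Let L be the labeled chain whose entries carry the distinct labels 1,…,r+r′+1 in order and whose weights are b_1,…,b_r, 1, b′_1,…,b′_{r′}. Then for every labeled chain M reachable from L by blow-down steps, every label i ∈ {1,…,r} lying in the center of b and every label r+1+j with j in the center of b′ still occurs among the labels of M; that is, no curve in the center of either T-chain is ever contracted. -/

import Mathlib

/-- Hirzebruch–Jung continued fraction: `hjcf [b₁,…,b_r] = b₁ - 1/(b₂ - 1/(⋯ - 1/b_r))`.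
(With the convention `hjcf [] = 0`, so that `hjcf [b] = b` since `1/0 = 0`.) -/
def hjcf : List ℚ → ℚ
  | [] => 0
  | b :: l => b - 1 / hjcf l

/-- Hirzebruch–Jung continued fraction of a list of integers. -/
def hjcfZ (b : List ℤ) : ℚ := hjcf (b.map (fun x => (x : ℚ)))

/-- `δ` is a discrepancy vector for the chain `b`. -/
def IsDiscrepancyVector (b : List ℤ) (δ : List ℚ) : Prop :=
  δ.length = b.length ∧
    ∀ i < b.length,
      -((b.getD i 0 : ℚ)) * δ.getD i 0
          + (if i = 0 then 0 else δ.getD (i - 1) 0) + δ.getD (i + 1) 0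
        = (b.getD i 0 : ℚ) - 2

/-- A labeled chain: a finite list of (label, weight) pairs. -/
abbrev LChain := List (ℕ × ℤ)

/-- Decrease the weight of the first entry by one (identity on the empty chain). -/
def decFirst (L : LChain) : LChain := L.modifyHead (fun p => (p.1, p.2 - 1))

/-- Decrease the weight of the last entry by one (identity on the empty chain). -/
def decLast (L : LChain) : LChain := (L.reverse.modifyHead (fun p => (p.1, p.2 - 1))).reverse

/-- A blow-down step: contract an entry of weight 1, decreasing the weights of its
neighbours by one. -/
def BlowDownStep (L M : LChain) : Prop :=
  ∃ (L₁ L₂ : LChain) (ℓ : ℕ),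
    L = L₁ ++ [(ℓ, (1 : ℤ))] ++ L₂ ∧ M = decLast L₁ ++ decFirst L₂

/-- `M` is reachable from `L` by finitely many blow-down steps. -/
def ReachableBD : LChain → LChain → Prop := Relation.ReflTransGen BlowDownStep

/-- continuant -/
def cont : List ℤ → ℤ
  | [] => 1
  | [x] => x
  | x :: y :: l => x * cont (y :: l) - cont l

@[simp] lemma cont_nil : cont [] = 1 := rfl
@[simp] lemma cont_single (x : ℤ) : cont [x] = x := rfl
lemma cont_cons (x : ℤ) (l : List ℤ) (hl : l ≠ []) :
    cont (x :: l) = x * cont l - cont l.tail := by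
  match l with
  | [] => simp at hl
  | y :: t => rfl

lemma hjcfZ_cons (x : ℤ) (l : List ℤ) : hjcfZ (x :: l) = (x : ℚ) - 1 / hjcfZ l := rfl

lemma cont_lt (b : List ℤ) (h2 : ∀ x ∈ b, 2 ≤ x) (hb : b ≠ []) :
    0 < cont b.tail ∧ cont b.tail < cont b := by
  induction b with
  | nil => simp at hb
  | cons x l ih =>
    rcases l with _ | ⟨y, t⟩
    · have := h2 x (by simp); simp; omega
    · have ih' := ih (fun z hz => h2 z (by simp [hz])) (by simp)
      have hx : 2 ≤ x := h2 x (by simp)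
      simp only [List.tail_cons] at ih' ⊢
      constructor
      · linarith [ih'.1, ih'.2]
      · rw [cont_cons x (y :: t) (by simp)]
        simp only [List.tail_cons]
        nlinarith [ih'.1, ih'.2]

lemma cont_pos (b : List ℤ) (h2 : ∀ x ∈ b, 2 ≤ x) : 0 < cont b := by
  rcases b with _ | ⟨x, l⟩
  · simp
  · exact lt_trans (cont_lt _ h2 (by simp)).1 (cont_lt _ h2 (by simp)).2

lemma hjcf_eq (b : List ℤ) (h2 : ∀ x ∈ b, 2 ≤ x) (hb : b ≠ []) :
    hjcfZ b = (cont b : ℚ) / (cont b.tail : ℚ) ∧ 1 < hjcfZ b := by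
  induction b with
  | nil => simp at hb
  | cons x l ih =>
    have hx : (2:ℤ) ≤ x := h2 x (by simp)
    have hx' : (2:ℚ) ≤ (x:ℚ) := by exact_mod_cast hx
    rcases eq_or_ne l [] with rfl | hl
    · rw [hjcfZ_cons]
      constructor
      · simp [hjcfZ, hjcf]
      · simp only [hjcfZ, hjcf, List.map_nil]
        norm_num [hjcf]; linarith
    · have ih' := ih (fun z hz => h2 z (by simp [hz])) hl
      have hpos := cont_lt l (fun z hz => h2 z (by simp [hz])) hl
      have hl1 : (1:ℚ) < hjcfZ l := ih'.2
      have hcl : (0:ℚ) < (cont l : ℚ) := by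
        exact_mod_cast lt_trans hpos.1 hpos.2
      rw [hjcfZ_cons]
      constructor
      · rw [ih'.1, cont_cons x l hl]
        have htl : (0:ℚ) < (cont l.tail : ℚ) := by exact_mod_cast hpos.1
        simp only [List.tail_cons]; push_cast
        field_simp
      · have h1 : 1 / hjcfZ l < 1 := by
          rw [div_lt_one (by linarith)]; linarith
        have h0 : 0 ≤ 1 / hjcfZ l := by positivity
        linarith

lemma cont_coprime (b : List ℤ) : IsCoprime (cont b) (cont b.tail) := by
  induction b with
  | nil => exact isCoprime_one_right
  | cons x l ih =>
    rcases eq_or_ne l [] with rfl | hl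
    · simpa using isCoprime_one_right
    · rw [cont_cons x l hl]
      simp only [List.tail_cons]
      have h1 : x * cont l - cont l.tail = -(cont l.tail) + cont l * x := by ring
      rw [h1]
      exact (ih.symm.neg_left).add_mul_left_left x

lemma two_step (P : ℕ → Prop) (h0 : P 0) (h1 : P 1)
    (hs : ∀ i, P i → P (i+1) → P (i+2)) : ∀ i, P i := by
  have h : ∀ i, P i ∧ P (i+1) := by
    intro i
    induction i with
    | zero => exact ⟨h0, h1⟩
    | succ k ih => exact ⟨ih.2, hs k ih.1 ih.2⟩
  exact fun i => (h i).1

def Sv (δ : List ℚ) : ℕ → ℚ := fun i => if i = 0 then 1 else 1 + δ.getD (i-1) 0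

def Yseq (b : List ℤ) : ℕ → ℤ
  | 0 => 0
  | 1 => 1
  | (i+2) => b.getD i 0 * Yseq b (i+1) - Yseq b i

def Zseq (b : List ℤ) : ℕ → ℤ := fun i => if i ≤ b.length then cont (b.drop i) else 0

@[simp] lemma Sv_zero (δ : List ℚ) : Sv δ 0 = 1 := rfl

lemma Sv_succ (δ : List ℚ) (i : ℕ) : Sv δ (i+1) = 1 + δ.getD i 0 := rfl

lemma Sv_out (b : List ℤ) (δ : List ℚ) (hlen : δ.length = b.length) (i : ℕ)
    (hi : b.length < i) : Sv δ i = 1 := by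
  rcases i with _ | j
  · rfl
  · rw [Sv_succ, List.getD_eq_default]
    · norm_num
    · omega

lemma Sv_rec (b : List ℤ) (δ : List ℚ) (hδ : IsDiscrepancyVector b δ) (j : ℕ)
    (hj : j < b.length) :
    (b.getD j 0 : ℚ) * Sv δ (j+1) = Sv δ j + Sv δ (j+2) := by
  have h := hδ.2 j hj
  rcases Nat.eq_zero_or_pos j with rfl | hj0
  · rw [if_pos rfl] at h
    show (b.getD 0 0 : ℚ) * (1 + δ.getD 0 0) = 1 + (1 + δ.getD 1 0)
    linear_combination -h
  · rw [if_neg (by omega)] at h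
    have e1 : Sv δ (j+1) = 1 + δ.getD j 0 := rfl
    have e2 : Sv δ (j+2) = 1 + δ.getD (j+1) 0 := rfl
    have e3 : Sv δ j = 1 + δ.getD (j-1) 0 := by
      simp only [Sv, if_neg (by omega : j ≠ 0)]
    rw [e1, e2, e3]
    linear_combination -h

lemma Zseq_rec (b : List ℤ) (j : ℕ) (hj : j + 2 ≤ b.length + 1) :
    Zseq b j = b.getD j 0 * Zseq b (j+1) - Zseq b (j+2) := by
  rcases Nat.lt_or_ge (j+2) (b.length+1) with h | h
  · have h1 : j + 2 ≤ b.length := by omega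
    simp only [Zseq, if_pos (by omega : j ≤ b.length), if_pos (by omega : j+1 ≤ b.length),
      if_pos h1]
    have hdrop : b.drop j = b.getD j 0 :: b.drop (j+1) := by
      rw [List.getD_eq_getElem _ _ (by omega)]
      exact List.drop_eq_getElem_cons (by omega)
    rw [hdrop, cont_cons _ _ (by
      intro hc
      have := List.length_drop (i := j+1) (l := b)
      rw [hc] at this
      simp at this
      omega)]
    congr 1
    rw [List.tail_drop]
  · -- j + 2 = b.length + 1
    have h1 : j + 1 = b.length := by omega
    simp only [Zseq, if_pos (by omega : j ≤ b.length), if_pos (by omega : j+1 ≤ b.length),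
      if_neg (by omega : ¬ j + 2 ≤ b.length)]
    have hdrop : b.drop j = b.getD j 0 :: b.drop (j+1) := by
      rw [List.getD_eq_getElem _ _ (by omega)]
      exact List.drop_eq_getElem_cons (by omega)
    have hnil : b.drop (j+1) = [] := List.drop_eq_nil_of_le (by omega)
    rw [hdrop, hnil]
    simp

lemma Yseq_mono (b : List ℤ) (h2 : ∀ x ∈ b, 2 ≤ x) :
    ∀ i ≤ b.length, 0 ≤ Yseq b i ∧ Yseq b i < Yseq b (i+1) := by
  intro i
  induction i with
  | zero => intro _; exact ⟨le_refl 0, by norm_num [Yseq]⟩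
  | succ k ih =>
    intro hk
    have ihk := ih (by omega)
    have hb : 2 ≤ b.getD k 0 := by
      have : b.getD k 0 ∈ b := by
        rw [List.getD_eq_getElem _ _ (by omega)]
        exact List.getElem_mem _
      exact h2 _ this
    constructor
    · omega
    · show Yseq b (k+1) < b.getD k 0 * Yseq b (k+1) - Yseq b k
      nlinarith [ihk.1, ihk.2]

lemma wronskian (b : List ℤ) :
    ∀ i ≤ b.length, Yseq b (i+1) * Zseq b i - Yseq b i * Zseq b (i+1) = cont b := by
  intro i
  induction i with
  | zero =>
    intro _
    simp [Yseq, Zseq]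
  | succ k ih =>
    intro hk
    have ihk := ih (by omega)
    have hz := Zseq_rec b k (by omega)
    show Yseq b (k+2) * Zseq b (k+1) - Yseq b (k+1) * Zseq b (k+2) = cont b
    have hy : Yseq b (k+2) = b.getD k 0 * Yseq b (k+1) - Yseq b k := rfl
    have hz2 : Zseq b (k+2) = b.getD k 0 * Zseq b (k+1) - Zseq b k := by omega
    rw [hy, hz2]
    nlinarith [ihk]

lemma Yseq_top (b : List ℤ) : Yseq b (b.length + 1) = cont b := by
  have h := wronskian b b.length (le_refl _)
  have hz1 : Zseq b b.length = 1 := by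
    simp [Zseq, List.drop_eq_nil_of_le (le_refl b.length)]
  have hz2 : Zseq b (b.length + 1) = 0 := by
    simp [Zseq]
  rw [hz1, hz2] at h
  omega

section ChainKey

variable (d n a : ℤ) (b : List ℤ) (δ : List ℚ)

lemma ident (hd : 1 ≤ d) (ha : 0 < a) (han : a < n)
    (h2 : ∀ x ∈ b, 2 ≤ x)
    (hcf : hjcfZ b = ((d * n ^ 2 : ℤ) : ℚ) / ((d * n * a - 1 : ℤ) : ℚ)) :
    b ≠ [] ∧ cont b = d * n ^ 2 ∧ cont b.tail = d * n * a - 1 := by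
  have hn : 2 ≤ n := by omega
  have hm : 0 < d * n ^ 2 := by positivity
  have hq : 0 < d * n * a - 1 := by nlinarith
  have hb : b ≠ [] := by
    intro hb
    rw [hb] at hcf
    have h0 : hjcfZ [] = 0 := by simp [hjcfZ, hjcf]
    rw [h0] at hcf
    have : (0:ℚ) < ((d * n ^ 2 : ℤ) : ℚ) / ((d * n * a - 1 : ℤ) : ℚ) := by
      apply div_pos <;> exact_mod_cast (by assumption)
    rw [← hcf] at this
    exact lt_irrefl _ this
  refine ⟨hb, ?_⟩
  obtain ⟨heq, -⟩ := hjcf_eq b h2 hb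
  rw [heq] at hcf
  have hpos := cont_lt b h2 hb
  have hct : (0:ℚ) < (cont b.tail : ℚ) := by exact_mod_cast hpos.1
  have hc : (0:ℚ) < (cont b : ℚ) := by exact_mod_cast lt_trans hpos.1 hpos.2
  have hqQ : (0:ℚ) < ((d * n * a - 1 : ℤ) : ℚ) := by exact_mod_cast hq
  rw [div_eq_div_iff (by linarith) (by linarith)] at hcf
  have hZ : cont b * (d * n * a - 1) = d * n ^ 2 * cont b.tail := by exact_mod_cast hcf
  have cop1 : IsCoprime (cont b) (cont b.tail) := cont_coprime b
  have cop2 : IsCoprime (d * n ^ 2) (d * n * a - 1) :=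
    ⟨d * a ^ 2, -(d * n * a + 1), by ring⟩
  have d1 : cont b ∣ d * n ^ 2 := by
    apply cop1.dvd_of_dvd_mul_right
    exact ⟨d * n * a - 1, by linarith [hZ]⟩
  have d2 : d * n ^ 2 ∣ cont b := by
    apply cop2.dvd_of_dvd_mul_right
    exact ⟨cont b.tail, by linarith [hZ]⟩
  have e1 : cont b = d * n ^ 2 := Int.dvd_antisymm (by exact_mod_cast le_of_lt (lt_trans hpos.1 hpos.2) |> fun h => h) (by positivity) d1 d2
  refine ⟨e1, ?_⟩
  rw [e1] at hZ
  nlinarith [hZ]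

lemma YZ_dvd (hd : 1 ≤ d) (ha : 0 < a) (han : a < n)
    (h2 : ∀ x ∈ b, 2 ≤ x)
    (hcf : hjcfZ b = ((d * n ^ 2 : ℤ) : ℚ) / ((d * n * a - 1 : ℤ) : ℚ)) :
    ∀ i, i ≤ b.length + 1 → (d * n) ∣ Yseq b i + Zseq b i := by
  obtain ⟨hb, e1, e2⟩ := ident d n a b hd ha han h2 hcf
  have hr : 1 ≤ b.length := by
    cases b
    · simp at hb
    · simp
  apply two_step (fun i => i ≤ b.length + 1 → (d * n) ∣ Yseq b i + Zseq b i)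
  · intro _
    have : Zseq b 0 = cont b := by simp [Zseq]
    rw [this, e1]
    show (d*n) ∣ Yseq b 0 + d * n ^ 2
    have : Yseq b 0 = 0 := rfl
    rw [this]
    exact ⟨n, by ring⟩
  · intro _
    have hz1 : Zseq b 1 = cont b.tail := by
      simp only [Zseq, if_pos (by omega : 1 ≤ b.length)]
      congr 1
      exact List.drop_one
    have hy1 : Yseq b 1 = 1 := rfl
    rw [hz1, hy1, e2]
    exact ⟨a, by ring⟩
  · intro i ih1 ih2 h
    have hy : Yseq b (i+2) = b.getD i 0 * Yseq b (i+1) - Yseq b i := rfl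
    have hz : Zseq b (i+2) = b.getD i 0 * Zseq b (i+1) - Zseq b i := by
      have := Zseq_rec b i (by omega)
      omega
    rw [hy, hz]
    have h1 := ih1 (by omega)
    have h2' := ih2 (by omega)
    have : b.getD i 0 * Yseq b (i+1) - Yseq b i + (b.getD i 0 * Zseq b (i+1) - Zseq b i)
        = b.getD i 0 * (Yseq b (i+1) + Zseq b (i+1)) - (Yseq b i + Zseq b i) := by ring
    rw [this]
    exact dvd_sub (Dvd.dvd.mul_left h2' _) h1

end ChainKey

lemma S_formula (d n a : ℤ) (b : List ℤ) (δ : List ℚ) (hd : 1 ≤ d) (ha : 0 < a) (han : a < n)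
    (h2 : ∀ x ∈ b, 2 ≤ x)
    (hcf : hjcfZ b = ((d * n ^ 2 : ℤ) : ℚ) / ((d * n * a - 1 : ℤ) : ℚ))
    (hδ : IsDiscrepancyVector b δ) :
    ∀ i, i ≤ b.length + 1 →
      ((cont b : ℤ) : ℚ) * Sv δ i = ((Yseq b i : ℤ) : ℚ) + ((Zseq b i : ℤ) : ℚ) := by
  obtain ⟨hb, e1, e2⟩ := ident d n a b hd ha han h2 hcf
  have hr : 1 ≤ b.length := List.length_pos_iff.mpr hb
  set r := b.length with hrdef
  set F : ℕ → ℚ := fun i => ((cont b : ℤ) : ℚ) * Sv δ i - ((Yseq b i : ℤ) : ℚ) - ((Zseq b i : ℤ) : ℚ)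
    with hF
  have hF0 : F 0 = 0 := by
    simp only [hF]
    have : Zseq b 0 = cont b := by simp [Zseq]
    rw [this]
    have : Yseq b 0 = 0 := rfl
    rw [this]
    simp
  have hFrec : ∀ j, j < r → F (j+2) = (b.getD j 0 : ℚ) * F (j+1) - F j := by
    intro j hj
    have hS := Sv_rec b δ hδ j hj
    have hy : Yseq b (j+2) = b.getD j 0 * Yseq b (j+1) - Yseq b j := rfl
    have hz : Zseq b (j+2) = b.getD j 0 * Zseq b (j+1) - Zseq b j := by
      have := Zseq_rec b j (by omega)
      omega
    simp only [hF]
    rw [hy, hz]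
    push_cast
    linear_combination -((cont b : ℤ) : ℚ) * hS
  -- F i = F 1 * Y i for i ≤ r + 1
  have hG : ∀ i, i ≤ r + 1 → F i = F 1 * ((Yseq b i : ℤ) : ℚ) := by
    apply two_step (fun i => i ≤ r + 1 → F i = F 1 * ((Yseq b i : ℤ) : ℚ))
    · intro _
      rw [hF0]
      have : Yseq b 0 = 0 := rfl
      rw [this]; simp
    · intro _
      have : Yseq b 1 = 1 := rfl
      rw [this]; simp
    · intro i ih1 ih2 h
      rw [hFrec i (by omega), ih1 (by omega), ih2 (by omega)]
      have hy : Yseq b (i+2) = b.getD i 0 * Yseq b (i+1) - Yseq b i := rfl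
      rw [hy]
      push_cast
      ring
  have hFtop : F (r + 1) = 0 := by
    simp only [hF]
    rw [Sv_out b δ hδ.1 (r+1) (by omega), Yseq_top b]
    have : Zseq b (r+1) = 0 := by simp [Zseq, hrdef]
    rw [this]
    simp
  have hY : ((Yseq b (r+1) : ℤ) : ℚ) = ((cont b : ℤ) : ℚ) := by rw [Yseq_top b]
  have hcb : ((cont b : ℤ) : ℚ) ≠ 0 := by
    have := cont_pos b h2
    positivity
  have hF1 : F 1 = 0 := by
    have := hG (r+1) (le_refl _)
    rw [hFtop, hY] at this
    rcases mul_eq_zero.mp this.symm with h | h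
    · exact h
    · exact absurd h hcb
  intro i hi
  have := hG i hi
  rw [hF1, zero_mul] at this
  simp only [hF] at this
  linarith

lemma chain_key (d n a : ℤ) (b : List ℤ) (δ : List ℚ) (hd : 1 ≤ d) (ha : 0 < a) (han : a < n)
    (h2 : ∀ x ∈ b, 2 ≤ x)
    (hcf : hjcfZ b = ((d * n ^ 2 : ℤ) : ℚ) / ((d * n * a - 1 : ℤ) : ℚ))
    (hδ : IsDiscrepancyVector b δ) :
    b ≠ [] ∧ ∀ i, 1 / (n : ℚ) ≤ Sv δ i := by
  obtain ⟨hb, e1, e2⟩ := ident d n a b hd ha han h2 hcf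
  have hn : 2 ≤ n := by omega
  have hnQ : (0:ℚ) < (n:ℚ) := by exact_mod_cast (by omega : (0:ℤ) < n)
  have hdQ : (0:ℚ) < (d:ℚ) := by exact_mod_cast (by omega : (0:ℤ) < d)
  refine ⟨hb, fun i => ?_⟩
  rcases Nat.eq_zero_or_pos i with rfl | hi0
  · rw [Sv_zero]
    rw [div_le_one hnQ]
    exact_mod_cast (by omega : (1:ℤ) ≤ n)
  rcases Nat.lt_or_ge b.length i with hgt | hle
  · rw [Sv_out b δ hδ.1 i hgt, div_le_one hnQ]
    exact_mod_cast (by omega : (1:ℤ) ≤ n)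
  -- 1 ≤ i ≤ b.length
  have hform := S_formula d n a b δ hd ha han h2 hcf hδ i (by omega)
  have hdvd := YZ_dvd d n a b hd ha han h2 hcf i (by omega)
  have hY1 : 1 ≤ Yseq b i := by
    obtain ⟨h0, hlt⟩ := Yseq_mono b h2 (i-1) (by omega)
    have : i - 1 + 1 = i := by omega
    rw [this] at hlt
    omega
  have hZ1 : 1 ≤ Zseq b i := by
    have : Zseq b i = cont (b.drop i) := by simp [Zseq, hle]
    rw [this]
    exact cont_pos _ (fun x hx => h2 x (List.mem_of_mem_drop hx))
  have hge : d * n ≤ Yseq b i + Zseq b i := by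
    apply Int.le_of_dvd (by omega) hdvd
  have hgeQ : ((d*n : ℤ) : ℚ) ≤ ((Yseq b i : ℤ) : ℚ) + ((Zseq b i : ℤ) : ℚ) := by
    push_cast
    exact_mod_cast (by push_cast; exact_mod_cast hge : ((d*n : ℤ) : ℚ) ≤ ((Yseq b i + Zseq b i : ℤ) : ℚ))
  rw [← hform] at hgeQ
  rw [e1] at hgeQ
  -- (d n : ℚ) ≤ d n^2 * Sv δ i  ⇒  1/n ≤ Sv
  have hm : (0:ℚ) < ((d * n^2 : ℤ) : ℚ) := by
    push_cast
    positivity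
  push_cast at hgeQ
  have key : (1:ℚ)/(n:ℚ) = ((d:ℚ)*n)/((d:ℚ)*(n:ℚ)^2) := by
    rw [div_eq_div_iff (ne_of_gt hnQ) (by positivity)]
    ring
  rw [key, div_le_iff₀ (by positivity : (0:ℚ) < (d:ℚ)*(n:ℚ)^2)]
  linarith [hgeQ]

section Good

variable (E : ℕ → ℚ)

/-- E-value of the head, `1` if empty (boundary). -/
def hd1 : LChain → ℚ
  | [] => 1
  | p :: _ => E p.1

/-- the chain inequality predicate, `ep` = E-value of the left neighbour. -/
def good : ℚ → LChain → Prop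
  | _, [] => True
  | ep, p :: t => (ep + hd1 E t ≤ (p.2 : ℚ) * E p.1) ∧ good (E p.1) t

@[simp] lemma good_nil (ep : ℚ) : good E ep [] = True := rfl
lemma good_cons (ep : ℚ) (p : ℕ × ℤ) (t : LChain) :
    good E ep (p :: t) ↔ (ep + hd1 E t ≤ (p.2 : ℚ) * E p.1) ∧ good E (E p.1) t := Iff.rfl

@[simp] lemma decFirst_nil : decFirst [] = [] := rfl
@[simp] lemma decFirst_cons (p : ℕ × ℤ) (t : LChain) :
    decFirst (p :: t) = (p.1, p.2 - 1) :: t := rfl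

@[simp] lemma decLast_nil : decLast [] = [] := rfl

lemma decLast_append_single (L : LChain) (p : ℕ × ℤ) :
    decLast (L ++ [p]) = L ++ [(p.1, p.2 - 1)] := by
  simp [decLast, List.modifyHead]

@[simp] lemma decLast_single (p : ℕ × ℤ) : decLast [p] = [(p.1, p.2 - 1)] := by
  simpa using decLast_append_single [] p

lemma decLast_cons (p : ℕ × ℤ) (t : LChain) (ht : t ≠ []) :
    decLast (p :: t) = p :: decLast t := by
  rcases List.eq_nil_or_concat t with rfl | ⟨t', q, rfl⟩
  · exact absurd rfl ht
  · rw [List.concat_eq_append, ← List.cons_append, decLast_append_single,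
      decLast_append_single, List.cons_append]

lemma hd1_decFirst (L : LChain) : hd1 E (decFirst L) = hd1 E L := by
  cases L <;> rfl

lemma map_fst_decFirst (L : LChain) : (decFirst L).map Prod.fst = L.map Prod.fst := by
  cases L <;> rfl

lemma map_fst_decLast (L : LChain) : (decLast L).map Prod.fst = L.map Prod.fst := by
  rcases List.eq_nil_or_concat L with rfl | ⟨t, p, rfl⟩
  · rfl
  · rw [List.concat_eq_append, decLast_append_single]
    simp

lemma good_decFirst (L : LChain) (x c : ℚ) (h : good E x L) (hx : c + hd1 E L ≤ x) :
    good E c (decFirst L) := by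
  cases L with
  | nil => trivial
  | cons q t =>
    rw [decFirst_cons, good_cons]
    rw [good_cons] at h
    refine ⟨?_, h.2⟩
    have : hd1 E (q :: t) = E q.1 := rfl
    rw [this] at hx
    push_cast
    nlinarith [h.1]

lemma hd1_decLast_append (L Y : LChain) (hL : L ≠ []) :
    hd1 E (decLast L ++ Y) = hd1 E L := by
  cases L with
  | nil => exact absurd rfl hL
  | cons p t =>
    rcases eq_or_ne t [] with rfl | ht
    · rw [decLast_single]
      rfl
    · rw [decLast_cons p t ht]
      rfl

lemma good_surgery : ∀ (L₁ : LChain) (ep : ℚ) (ℓ : ℕ) (L₂ : LChain),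
    good E ep (L₁ ++ (ℓ, (1:ℤ)) :: L₂) → good E ep (decLast L₁ ++ decFirst L₂) := by
  intro L₁
  induction L₁ with
  | nil =>
    intro ep ℓ L₂ h
    rw [List.nil_append, good_cons] at h
    rw [decLast_nil, List.nil_append]
    apply good_decFirst E L₂ (E ℓ) ep h.2
    have := h.1
    push_cast at this
    linarith
  | cons p t ih =>
    intro ep ℓ L₂ h
    rw [List.cons_append, good_cons] at h
    rcases eq_or_ne t [] with rfl | ht
    · -- L₁ = [p]
      rw [List.nil_append] at h
      have h1 := h.1
      have h2 := h.2
      rw [good_cons] at h2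
      have hh : hd1 E ((ℓ, (1:ℤ)) :: L₂) = E ℓ := rfl
      rw [hh] at h1
      rw [decLast_single, List.cons_append, List.nil_append, good_cons]
      constructor
      · rw [hd1_decFirst]
        have := h2.1
        push_cast at this ⊢
        linarith
      · exact good_decFirst E L₂ (E ℓ) (E p.1) h2.2 (by
          have := h2.1
          push_cast at this
          linarith)
    · rw [decLast_cons p t ht, List.cons_append, good_cons]
      constructor
      · rw [hd1_decLast_append E t (decFirst L₂) ht]
        have : hd1 E (t ++ (ℓ, (1:ℤ)) :: L₂) = hd1 E t := by
          cases t with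
          | nil => exact absurd rfl ht
          | cons q s => rfl
        rw [this] at h
        exact h.1
      · exact ih (E p.1) ℓ L₂ h.2

/-- E-value of the last entry of `L`, `ep` if `L` is empty. -/
def lstE : ℚ → LChain → ℚ
  | ep, [] => ep
  | _, p :: t => lstE (E p.1) t

lemma good_mid : ∀ (L₁ : LChain) (ep : ℚ) (p : ℕ × ℤ) (L₂ : LChain),
    good E ep (L₁ ++ p :: L₂) → lstE E ep L₁ + hd1 E L₂ ≤ (p.2 : ℚ) * E p.1 := by
  intro L₁
  induction L₁ with
  | nil =>
    intro ep p L₂ h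
    rw [List.nil_append, good_cons] at h
    exact h.1
  | cons q t ih =>
    intro ep p L₂ h
    rw [List.cons_append, good_cons] at h
    exact ih (E q.1) p L₂ h.2

lemma lstE_cases (L : LChain) (ep : ℚ) :
    lstE E ep L = ep ∨ ∃ q ∈ L, lstE E ep L = E q.1 := by
  induction L generalizing ep with
  | nil => exact Or.inl rfl
  | cons p t ih =>
    rcases ih (E p.1) with h | ⟨q, hq, h⟩
    · exact Or.inr ⟨p, by simp, h⟩
    · exact Or.inr ⟨q, by simp [hq], h⟩

lemma hd1_cases (L : LChain) :
    hd1 E L = 1 ∨ ∃ q ∈ L, hd1 E L = E q.1 := by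
  cases L with
  | nil => exact Or.inl rfl
  | cons p t => exact Or.inr ⟨p, by simp, rfl⟩

/-- building the initial chain -/
def chainFrom : ℕ → List ℤ → LChain
  | _, [] => []
  | s, x :: w => (s+1, x) :: chainFrom (s+1) w

lemma good_chainFrom : ∀ (w : List ℤ) (s : ℕ),
    (∀ j < w.length, E (s + j) + E (s + j + 2) ≤ (w.getD j 0 : ℚ) * E (s + j + 1)) →
    E (s + w.length + 1) = 1 →
    good E (E s) (chainFrom s w) := by
  intro w
  induction w with
  | nil => intro s _ _; trivial
  | cons x t ih =>
    intro s hrec hend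
    show good E (E s) ((s+1, x) :: chainFrom (s+1) t)
    rw [good_cons]
    constructor
    · have h0 := hrec 0 (by simp)
      simp only [Nat.add_zero] at h0
      cases t with
      | nil =>
        have : hd1 E (chainFrom (s+1) []) = 1 := rfl
        rw [this]
        have he : E (s + 2) = 1 := by
          have : s + List.length [x] + 1 = s + 2 := by simp
          rw [← this]; exact hend
        rw [he] at h0
        exact h0
      | cons y u =>
        have : hd1 E (chainFrom (s+1) (y :: u)) = E (s+2) := rfl
        rw [this]
        exact h0
    · apply ih (s+1)
      · intro j hj
        have := hrec (j+1) (by simp; omega)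
        rw [List.getD_cons_succ] at this
        convert this using 3 <;> omega
      · have : s + 1 + t.length + 1 = s + (x :: t).length + 1 := by simp; omega
        rw [this]
        exact hend

lemma chainFrom_zip : ∀ (w : List ℤ) (s : ℕ),
    chainFrom s w = List.zip ((List.range w.length).map (· + 1 + s)) w := by
  intro w
  induction w with
  | nil => intro s; rfl
  | cons x t ih =>
    intro s
    show (s+1, x) :: chainFrom (s+1) t = _
    simp only [List.length_cons]
    rw [List.range_succ_eq_map]
    simp only [List.map_cons, List.map_map]
    rw [List.zip_cons_cons]
    congr 1
    · simp [Nat.add_comm]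
    · rw [ih (s+1)]
      congr 1
      apply List.map_congr_left
      intro i _
      simp
      omega

lemma no_contract (lbl : List ℕ) (hp : lbl.Pairwise (· < ·)) (c : ℕ) (eLB eRB : ℚ)
    (hLB1 : eLB ≤ 1) (hRB1 : eRB ≤ 1) (hgt : E c < eLB + eRB)
    (hleft : ∀ x ∈ lbl, x < c → eLB ≤ E x)
    (hright : ∀ x ∈ lbl, c < x → eRB ≤ E x)
    (L₁ L₂ : LChain)
    (hsub : ((L₁ ++ (c, (1:ℤ)) :: L₂).map Prod.fst).Sublist lbl)
    (hgood : good E 1 (L₁ ++ (c, (1:ℤ)) :: L₂)) : False := by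
  have hmid := good_mid E L₁ 1 (c, (1:ℤ)) L₂ hgood
  simp only at hmid
  have hmap : (L₁ ++ (c, (1:ℤ)) :: L₂).map Prod.fst
      = L₁.map Prod.fst ++ c :: L₂.map Prod.fst := by simp
  rw [hmap] at hsub
  have hpM : (L₁.map Prod.fst ++ c :: L₂.map Prod.fst).Pairwise (· < ·) :=
    hp.sublist hsub
  rw [List.pairwise_append] at hpM
  have hmem : ∀ x ∈ L₁.map Prod.fst ++ c :: L₂.map Prod.fst, x ∈ lbl :=
    fun x hx => hsub.subset hx
  have hlst : eLB ≤ lstE E 1 L₁ := by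
    rcases lstE_cases E L₁ 1 with h | ⟨q, hq, h⟩
    · rw [h]; exact hLB1
    · rw [h]
      have hq1 : q.1 ∈ L₁.map Prod.fst := List.mem_map_of_mem hq
      have hlt : q.1 < c := hpM.2.2 q.1 hq1 c (by simp)
      exact hleft q.1 (hmem q.1 (by simp [hq1])) hlt
  have hhd : eRB ≤ hd1 E L₂ := by
    rcases hd1_cases E L₂ with h | ⟨q, hq, h⟩
    · rw [h]; exact hRB1
    · rw [h]
      have hq1 : q.1 ∈ L₂.map Prod.fst := List.mem_map_of_mem hq
      have hlt : c < q.1 := by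
        have := hpM.2.1
        rw [List.pairwise_cons] at this
        exact this.1 q.1 hq1
      exact hright q.1 (hmem q.1 (by simp [hq1])) hlt
  have : E c < E c := by
    calc E c < eLB + eRB := hgt
    _ ≤ lstE E 1 L₁ + hd1 E L₂ := by linarith
    _ ≤ 1 * E c := hmid
    _ = E c := by ring
  exact lt_irrefl _ this

lemma reach_main (lbl : List ℕ) (hp : lbl.Pairwise (· < ·)) (C : ℕ → Prop)
    (hCgood : ∀ c, C c → ∃ eLB eRB, eLB ≤ 1 ∧ eRB ≤ 1 ∧ E c < eLB + eRB ∧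
      (∀ x ∈ lbl, x < c → eLB ≤ E x) ∧ (∀ x ∈ lbl, c < x → eRB ≤ E x))
    (L M : LChain) (h : ReachableBD L M)
    (h1 : (L.map Prod.fst).Sublist lbl) (h2 : good E 1 L)
    (h3 : ∀ c, C c → c ∈ L.map Prod.fst) :
    (M.map Prod.fst).Sublist lbl ∧ good E 1 M ∧ ∀ c, C c → c ∈ M.map Prod.fst := by
  induction h with
  | refl => exact ⟨h1, h2, h3⟩
  | tail hr hstep ih =>
    obtain ⟨hs1, hs2, hs3⟩ := ih
    obtain ⟨L₁, L₂, ℓ, hMeq, hM'eq⟩ := hstep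
    rw [List.append_assoc, List.singleton_append] at hMeq
    subst hMeq
    subst hM'eq
    have hmapM' : (decLast L₁ ++ decFirst L₂).map Prod.fst
        = L₁.map Prod.fst ++ L₂.map Prod.fst := by
      rw [List.map_append, map_fst_decLast, map_fst_decFirst]
    have hmapM : ((L₁ ++ (ℓ, (1:ℤ)) :: L₂).map Prod.fst)
        = L₁.map Prod.fst ++ ℓ :: L₂.map Prod.fst := by simp
    refine ⟨?_, ?_, ?_⟩
    · rw [hmapM']
      refine List.Sublist.trans ?_ hs1
      rw [hmapM]
      exact (List.sublist_cons_self ℓ _).append_left _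
    · exact good_surgery E L₁ 1 ℓ L₂ hs2
    · intro c hc
      have hcM := hs3 c hc
      have hcne : c ≠ ℓ := by
        rintro rfl
        obtain ⟨eLB, eRB, e1, e2, e3, e4, e5⟩ := hCgood c hc
        exact no_contract E lbl hp c eLB eRB e1 e2 e3 e4 e5 L₁ L₂ hs1 hs2
      rw [hmapM'] ; rw [hmapM] at hcM
      simp only [List.mem_append, List.mem_cons] at hcM ⊢
      tauto

end Good

theorem stmt9 (d n a d' n' a' : ℤ)
    (hd : 1 ≤ d) (ha : 0 < a) (han : a < n) (hgcd : Int.gcd a n = 1)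
    (hd' : 1 ≤ d') (ha' : 0 < a') (han' : a' < n') (hgcd' : Int.gcd a' n' = 1)
    (b b' : List ℤ) (h2 : ∀ x ∈ b, 2 ≤ x) (h2' : ∀ x ∈ b', 2 ≤ x)
    (hcf : hjcfZ b = ((d * n ^ 2 : ℤ) : ℚ) / ((d * n * a - 1 : ℤ) : ℚ))
    (hcf' : hjcfZ b' = ((d' * n' ^ 2 : ℤ) : ℚ) / ((d' * n' * a' - 1 : ℤ) : ℚ))
    (δ δ' : List ℚ)
    (hδ : IsDiscrepancyVector b δ) (hδ' : IsDiscrepancyVector b' δ')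
    (hsum : δ.getD (b.length - 1) 0 + δ'.getD 0 0 ≤ -1)
    (L : LChain)
    (hL : L = List.zip ((List.range (b.length + b'.length + 1)).map (· + 1))
      (b ++ [1] ++ b'))
    (M : LChain) (hM : ReachableBD L M) :
    (∀ i, 1 ≤ i → i ≤ b.length →
        δ.getD (i - 1) 0 = -((n : ℚ) - 1) / (n : ℚ) → ∃ p ∈ M, p.1 = i) ∧
      (∀ j, 1 ≤ j → j ≤ b'.length →
        δ'.getD (j - 1) 0 = -((n' : ℚ) - 1) / (n' : ℚ) →
          ∃ p ∈ M, p.1 = b.length + 1 + j) := by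
  classical
  obtain ⟨hb, hS⟩ := chain_key d n a b δ hd ha han h2 hcf hδ
  obtain ⟨hb', hS'⟩ := chain_key d' n' a' b' δ' hd' ha' han' h2' hcf' hδ'
  set r := b.length with hr_def
  set r' := b'.length with hr'_def
  set N := r + r' + 1 with hN_def
  have hr1 : 1 ≤ r := List.length_pos_iff.mpr hb
  have hr'1 : 1 ≤ r' := List.length_pos_iff.mpr hb'
  have hnQ : (0:ℚ) < (n:ℚ) := by exact_mod_cast (by omega : (0:ℤ) < n)
  have hn'Q : (0:ℚ) < (n':ℚ) := by exact_mod_cast (by omega : (0:ℤ) < n')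
  have h1n : (0:ℚ) < 1/(n:ℚ) := by positivity
  have h1n' : (0:ℚ) < 1/(n':ℚ) := by positivity
  have h1n1 : 1/(n:ℚ) ≤ 1 := by
    rw [div_le_one hnQ]; exact_mod_cast (by omega : (1:ℤ) ≤ n)
  have h1n'1 : 1/(n':ℚ) ≤ 1 := by
    rw [div_le_one hn'Q]; exact_mod_cast (by omega : (1:ℤ) ≤ n')
  set E : ℕ → ℚ := fun ℓ =>
    if ℓ = 0 then 1 else if ℓ ≤ r then Sv δ ℓ
    else if ℓ = r + 1 then Sv δ r + Sv δ' 1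
    else Sv δ' (ℓ - (r+1)) with hE_def
  have hEb : ∀ ℓ, ℓ ≤ r → E ℓ = Sv δ ℓ := by
    intro ℓ hℓ
    rcases eq_or_ne ℓ 0 with rfl | h0
    · simp [hE_def, Sv]
    · simp only [hE_def]; rw [if_neg h0, if_pos hℓ]
  have hEm : E (r+1) = Sv δ r + Sv δ' 1 := by
    simp only [hE_def]
    rw [if_neg (by omega), if_neg (by omega)]
    simp
  have hEb' : ∀ ℓ, r + 2 ≤ ℓ → E ℓ = Sv δ' (ℓ - (r+1)) := by
    intro ℓ hℓ
    simp only [hE_def]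
    rw [if_neg (by omega), if_neg (by omega), if_neg (by omega)]
  set μ : ℚ := min (1/(n:ℚ)) (1/(n':ℚ)) with hμ_def
  have hμpos : 0 < μ := lt_min h1n h1n'
  have hμ1 : μ ≤ 1 := le_trans (min_le_left _ _) h1n1
  have hEmem : ∀ x, μ ≤ E x := by
    intro x
    rcases le_or_gt x r with hx | hx
    · rw [hEb x hx]
      exact le_trans (min_le_left _ _) (hS x)
    rcases eq_or_ne x (r+1) with rfl | hx2
    · rw [hEm]
      have := hS r; have := hS' 1
      have := min_le_left (1/(n:ℚ)) (1/(n':ℚ))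
      have := min_le_right (1/(n:ℚ)) (1/(n':ℚ))
      nlinarith [h1n', hS r, hS' 1]
    · rw [hEb' x (by omega)]
      exact le_trans (min_le_right _ _) (hS' _)
  have hEpos : ∀ x, 0 < E x := fun x => lt_of_lt_of_le hμpos (hEmem x)
  have hSr : Sv δ r = 1 + δ.getD (r-1) 0 := by
    have he : r - 1 + 1 = r := by omega
    have h0 := Sv_succ δ (r-1)
    rw [he] at h0
    exact h0
  have hS'1 : Sv δ' 1 = 1 + δ'.getD 0 0 := Sv_succ δ' 0
  have hmid1 : Sv δ r + Sv δ' 1 ≤ 1 := by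
    rw [hSr, hS'1]; linarith [hsum]
  set lbl : List ℕ := (List.range N).map (· + 1) with hlbl_def
  have hlblp : lbl.Pairwise (· < ·) := by
    rw [hlbl_def, List.pairwise_map]
    exact (List.pairwise_lt_range (n := N)).imp (by omega)
  have hlblmem : ∀ x, x ∈ lbl ↔ 1 ≤ x ∧ x ≤ N := by
    intro x
    simp only [hlbl_def, List.mem_map, List.mem_range]
    constructor
    · rintro ⟨t, ht, rfl⟩; omega
    · rintro ⟨h1, h2⟩; exact ⟨x - 1, by omega, by omega⟩
  set ws : List ℤ := b ++ [1] ++ b' with hws_def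
  have hwlen : ws.length = N := by simp [hws_def, hN_def]; omega
  have hLc : L = chainFrom 0 ws := by
    rw [chainFrom_zip, hL, hwlen]
    try (congr 1; apply List.map_congr_left; intro t _; omega)
  have hmapL : L.map Prod.fst = lbl := by
    rw [hL, hlbl_def]
    apply List.map_fst_zip
    rw [List.length_map, List.length_range]
    exact hwlen.ge
  -- weights of ws
  have hlen1 : (b ++ [1]).length = r + 1 := by simp [hr_def]
  have hws1 : ∀ j, j < r → ws.getD j 0 = b.getD j 0 := by
    intro j hj
    rw [hws_def, List.getD_append _ _ _ _ (by rw [hlen1]; omega)]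
    rw [List.getD_append _ _ _ _ (show j < b.length by omega)]
  have hws2 : ws.getD r 0 = 1 := by
    rw [hws_def, List.getD_append _ _ _ _ (by rw [hlen1]; omega)]
    rw [List.getD_append_right _ _ _ _ (show b.length ≤ r by omega)]
    have h0 : r - b.length = 0 := by omega
    rw [h0]
    rfl
  have hws3 : ∀ j, r + 1 ≤ j → ws.getD j 0 = b'.getD (j - (r+1)) 0 := by
    intro j hj
    rw [hws_def, List.getD_append_right _ _ _ _ (by rw [hlen1]; omega)]
    rw [hlen1]
  -- the chain inequalities
  have hSout : ∀ i, r < i → Sv δ i = 1 := fun i hi => Sv_out b δ hδ.1 i hi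
  have hS'out : ∀ i, r' < i → Sv δ' i = 1 := fun i hi => Sv_out b' δ' hδ'.1 i hi
  have hrec : ∀ j, j < N → E j + E (j+2) ≤ (ws.getD j 0 : ℚ) * E (j+1) := by
    intro j hj
    rcases lt_or_ge (j+1) r with hc | hc
    · -- j + 2 ≤ r
      rw [hws1 j (by omega), hEb j (by omega), hEb (j+1) (by omega), hEb (j+2) (by omega)]
      exact le_of_eq (Sv_rec b δ hδ j (by omega)).symm
    rcases eq_or_lt_of_le hc with hc1 | hc
    · -- j + 1 = r
      rw [hws1 j (by omega), hEb j (by omega), hEb (j+1) (by omega)]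
      have h2eq : j + 2 = r + 1 := by omega
      rw [h2eq, hEm]
      have hrec0 := Sv_rec b δ hδ j (by omega)
      rw [h2eq, hSout (r+1) (by omega)] at hrec0
      rw [hc1.symm] at hrec0 ⊢
      linarith [hmid1, hrec0]
    rcases eq_or_lt_of_le (show r + 1 ≤ j + 1 by omega) with hc2 | hc
    · -- j = r
      have hj_eq : j = r := by omega
      rw [hj_eq, hws2, hEb r (le_refl r), hEm, hEb' (r+2) (by omega)]
      rw [show r + 2 - (r+1) = 1 by omega]
      push_cast
      linarith
    rcases eq_or_lt_of_le (show r + 2 ≤ j + 1 by omega) with hc3 | hc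
    · -- j = r + 1
      have hj_eq : j = r + 1 := by omega
      rw [hj_eq, hws3 (r+1) (by omega), hEm, hEb' (r+2) (by omega), hEb' (r+3) (by omega)]
      rw [show r + 1 - (r+1) = 0 by omega, show r + 2 - (r+1) = 1 by omega,
        show r + 3 - (r+1) = 2 by omega]
      have hrec0 := Sv_rec b' δ' hδ' 0 (by omega)
      rw [Sv_zero] at hrec0
      linarith [hmid1, hrec0]
    · -- j ≥ r + 2
      rw [hws3 j (by omega), hEb' j (by omega), hEb' (j+1) (by omega), hEb' (j+2) (by omega)]
      rw [show j + 1 - (r+1) = (j - (r+1)) + 1 by omega,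
        show j + 2 - (r+1) = (j - (r+1)) + 2 by omega]
      have := Sv_rec b' δ' hδ' (j - (r+1)) (by omega)
      linarith [this]
  have hend : E (N+1) = 1 := by
    rw [hEb' (N+1) (by omega), hS'out _ (by omega)]
  have hgoodinit : good E 1 L := by
    rw [hLc]
    have h0 : E 0 = 1 := by simp [hE_def]
    rw [← h0]
    apply good_chainFrom
    · intro j hj
      simp only [Nat.zero_add]
      exact hrec j (by omega)
    · simp only [Nat.zero_add]
      rw [hwlen]
      exact hend
  set C : ℕ → Prop := fun c =>
    (1 ≤ c ∧ c ≤ r ∧ E c = 1/(n:ℚ)) ∨ (r + 2 ≤ c ∧ c ≤ N ∧ E c = 1/(n':ℚ))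
    with hC_def
  have hCgood : ∀ c, C c → ∃ eLB eRB, eLB ≤ 1 ∧ eRB ≤ 1 ∧ E c < eLB + eRB ∧
      (∀ x ∈ lbl, x < c → eLB ≤ E x) ∧ (∀ x ∈ lbl, c < x → eRB ≤ E x) := by
    intro c hc
    rcases hc with ⟨hc1, hc2, hc3⟩ | ⟨hc1, hc2, hc3⟩
    · refine ⟨1/(n:ℚ), μ, h1n1, hμ1, by rw [hc3]; linarith, ?_, ?_⟩
      · intro x _ hx
        rw [hEb x (by omega)]
        exact hS x
      · intro x _ _
        exact hEmem x
    · refine ⟨μ, 1/(n':ℚ), hμ1, h1n'1, by rw [hc3]; linarith, ?_, ?_⟩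
      · intro x _ _
        exact hEmem x
      · intro x _ hx
        rw [hEb' x (by omega)]
        exact hS' _
  have hinit3 : ∀ c, C c → c ∈ L.map Prod.fst := by
    intro c hc
    rw [hmapL, hlblmem]
    rcases hc with ⟨hc1, hc2, -⟩ | ⟨hc1, hc2, -⟩ <;> omega
  obtain ⟨-, -, hcent⟩ := reach_main E lbl hlblp C hCgood L M hM
    (by rw [hmapL]) hgoodinit hinit3
  constructor
  · intro i h1i hir hdisc
    have hEi : E i = 1/(n:ℚ) := by
      rw [hEb i hir]
      have he : i - 1 + 1 = i := by omega
      rw [← he, Sv_succ, hdisc]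
      field_simp
      ring
    have hmem := hcent i (Or.inl ⟨h1i, hir, hEi⟩)
    obtain ⟨p, hp, hpe⟩ := List.mem_map.mp hmem
    exact ⟨p, hp, hpe⟩
  · intro j h1j hjr hdisc
    have hEi : E (r + 1 + j) = 1/(n':ℚ) := by
      rw [hEb' (r+1+j) (by omega), show r + 1 + j - (r+1) = j by omega]
      have he : j - 1 + 1 = j := by omega
      rw [← he, Sv_succ, hdisc]
      field_simp
      ring
    have hmem := hcent (r+1+j) (Or.inr ⟨by omega, by omega, hEi⟩)
    obtain ⟨p, hp, hpe⟩ := List.mem_map.mp hmem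
    exact ⟨p, hp, by omega⟩
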